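/- Let (K, J) be a Krein space and let A, B be commuting bounded Krein-selfadjoint operators on K (A^[*] = A, B^[*] = B, AB = BA). Let p, q be real polynomials such that [p(A)x, x] ≥ 0 and [q(B)x, x] ≥ 0 for all x ∈ K, where [y,x] = ⟨Jy,x⟩. Then there exist complex Hilbert spaces V₁, V₂, V and bounded injective linear operators T₁ : V₁ → K, T₂ : V₂ → K, T : V → K such that T₁ T₁^[*] = p(A), T₂ T₂^[*] = q(B) and T T^[*] = p(A) + q(B); moreover T₁ T₁^[*] and T₂ T₂^[*] commute. -/

import Mathlib

open ContinuousLinearMap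

/-- A complex Hilbert space together with a bounded operator into a fixed space `K`. -/
structure HilbertInto (K : Type) [NormedAddCommGroup K] [InnerProductSpace ℂ K] where
  carrier : Type
  [grp : NormedAddCommGroup carrier]
  [ips : InnerProductSpace ℂ carrier]
  [cs : CompleteSpace carrier]
  T : carrier →L[ℂ] K

attribute [instance] HilbertInto.grp HilbertInto.ips HilbertInto.cs

set_option maxHeartbeats 1000000 in
set_option synthInstance.maxHeartbeats 400000 in
/-- Any positive operator `S` on a Hilbert space factors as `T T†` with `T` injective. -/
lemma exists_hilbertInto_factor {K : Type} [NormedAddCommGroup K] [InnerProductSpace ℂ K]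
    [CompleteSpace K] (S : K →L[ℂ] K) (hS : S.IsPositive) :
    ∃ W : HilbertInto K, Function.Injective W.T ∧ W.T ∘L adjoint W.T = S := by
  have hS0 : (0 : K →L[ℂ] K) ≤ S := (ContinuousLinearMap.nonneg_iff_isPositive S).2 hS
  set R := CFC.sqrt S with hRdef
  have hR0 : (0 : K →L[ℂ] K) ≤ R := CFC.sqrt_nonneg S
  have hRpos : R.IsPositive := (ContinuousLinearMap.nonneg_iff_isPositive R).1 hR0
  have hRR : R * R = S := CFC.sqrt_mul_sqrt_self S hS0
  have hRsa : adjoint R = R := by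
    have := hRpos.isSelfAdjoint
    rwa [isSelfAdjoint_iff'] at this
  set V := (LinearMap.ker (R : K →ₗ[ℂ] K))ᗮ with hV
  have hVclosed : IsClosed (V : Set K) := Submodule.isClosed_orthogonal _
  haveI : CompleteSpace V := hVclosed.completeSpace_coe
  -- range of R lands in V
  have hmem : ∀ x : K, R x ∈ V := by
    intro x
    rw [hV, Submodule.mem_orthogonal]
    intro u hu
    rw [← hRsa, ContinuousLinearMap.adjoint_inner_right]
    rw [LinearMap.mem_ker] at hu
    simp [show R u = 0 from hu]
  refine ⟨⟨V, R ∘L V.subtypeL⟩, ?_, ?_⟩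
  · intro v w hvw
    simp only [ContinuousLinearMap.comp_apply, Submodule.subtypeL_apply] at hvw
    have h0 : R ((v : K) - w) = 0 := by rw [map_sub, hvw, sub_self]
    have hker : ((v : K) - (w : K)) ∈ LinearMap.ker (R : K →ₗ[ℂ] K) := h0
    have hV' : ((v : K) - (w : K)) ∈ V := sub_mem v.2 w.2
    have : ((v : K) - (w : K)) = 0 := by
      have := Submodule.inner_left_of_mem_orthogonal (𝕜 := ℂ) hker hV'
      rwa [inner_self_eq_zero] at this
    exact Subtype.ext (sub_eq_zero.mp this)
  · ext x
    rw [ContinuousLinearMap.adjoint_comp, Submodule.adjoint_subtypeL, hRsa]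
    simp only [ContinuousLinearMap.comp_apply, Submodule.subtypeL_apply]
    have hproj : (V.orthogonalProjectionOnto (R x) : K) = R x := by
      exact congrArg Subtype.val
        (Submodule.orthogonalProjectionOnto_mem_subspace_eq_self (⟨R x, hmem x⟩ : V))
    rw [hproj]
    have : R (R x) = (R * R) x := rfl
    rw [this, hRR]

/-- Polynomial evaluations of commuting operators commute. -/
lemma commute_aeval {K : Type} [NormedAddCommGroup K] [InnerProductSpace ℂ K] [CompleteSpace K]
    {A B : K →L[ℂ] K} (h : Commute A B) (p q : Polynomial ℂ) :
    Commute (Polynomial.aeval A p) (Polynomial.aeval B q) := by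
  have step : ∀ (C D : K →L[ℂ] K), Commute C D → ∀ r : Polynomial ℂ,
      Commute (Polynomial.aeval C r) D := by
    intro C D hCD r
    induction r using Polynomial.induction_on' with
    | add f g hf hg => rw [map_add]; exact hf.add_left hg
    | monomial n c =>
      rw [Polynomial.aeval_monomial]
      exact (Algebra.commute_algebraMap_left c D).mul_left (hCD.pow_left n)
  have h1 : Commute (Polynomial.aeval A p) B := step A B h p
  exact (step B (Polynomial.aeval A p) h1.symm q).symm

/-- For commuting bounded Krein-selfadjoint `A, B` on a Krein space `(K, J)`
with definitizing real polynomials `p, q`, there exist Hilbert spaces `V₁, V₂, V` and bounded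
injective operators `T₁, T₂, T` into `K` with `T₁ T₁^[*] = p(A)`, `T₂ T₂^[*] = q(B)`,
`T T^[*] = p(A) + q(B)`; moreover `T₁ T₁^[*]` and `T₂ T₂^[*]` commute. -/
theorem stmt_3
    {K : Type} [NormedAddCommGroup K] [InnerProductSpace ℂ K] [CompleteSpace K]
    (J : K →L[ℂ] K) (hJsa : IsSelfAdjoint J) (hJ2 : J ∘L J = 1)
    (A B : K →L[ℂ] K)
    (hAsa : J ∘L adjoint A ∘L J = A) (hBsa : J ∘L adjoint B ∘L J = B)
    (hAB : A ∘L B = B ∘L A)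
    (p q : Polynomial ℝ)
    (pA qB : K →L[ℂ] K)
    (hpA : pA = Polynomial.aeval A (p.map (algebraMap ℝ ℂ)))
    (hqB : qB = Polynomial.aeval B (q.map (algebraMap ℝ ℂ)))
    (hp : ∀ x : K, 0 ≤ (inner ℂ (J (pA x)) x : ℂ).re ∧ (inner ℂ (J (pA x)) x : ℂ).im = 0)
    (hq : ∀ x : K, 0 ≤ (inner ℂ (J (qB x)) x : ℂ).re ∧ (inner ℂ (J (qB x)) x : ℂ).im = 0) :
    ∃ (W₁ W₂ W : HilbertInto K),
      Function.Injective W₁.T ∧ Function.Injective W₂.T ∧ Function.Injective W.T ∧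
      W₁.T ∘L (adjoint W₁.T ∘L J) = pA ∧
      W₂.T ∘L (adjoint W₂.T ∘L J) = qB ∧
      W.T ∘L (adjoint W.T ∘L J) = pA + qB ∧
      (W₁.T ∘L (adjoint W₁.T ∘L J)) ∘L (W₂.T ∘L (adjoint W₂.T ∘L J)) =
        (W₂.T ∘L (adjoint W₂.T ∘L J)) ∘L (W₁.T ∘L (adjoint W₁.T ∘L J)) := by
  have hadjJ : adjoint J = J := by
    rw [← ContinuousLinearMap.star_eq_adjoint]; exact hJsa
  -- J ∘ pA and J ∘ qB are positive
  have posJC : ∀ C : K →L[ℂ] K,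
      (∀ x : K, 0 ≤ (inner ℂ (J (C x)) x : ℂ).re ∧ (inner ℂ (J (C x)) x : ℂ).im = 0) →
      (J ∘L C).IsPositive := by
    intro C hC
    rw [ContinuousLinearMap.isPositive_iff_complex]
    intro x
    obtain ⟨h1, h2⟩ := hC x
    refine ⟨?_, h1⟩
    apply Complex.ext <;> simp [h2]
  -- conjugate: C ∘ J is positive whenever J ∘ C is
  have posCJ : ∀ C : K →L[ℂ] K, (J ∘L C).IsPositive → (C ∘L J).IsPositive := by
    intro C hC
    have := hC.conj_adjoint J
    rw [hadjJ] at this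
    have e : J ∘L (J ∘L C) ∘L J = C ∘L J := by
      rw [← ContinuousLinearMap.comp_assoc, ← ContinuousLinearMap.comp_assoc, hJ2,
        ContinuousLinearMap.one_def, ContinuousLinearMap.id_comp]
    rwa [e] at this
  have hpApos : (pA ∘L J).IsPositive := posCJ pA (posJC pA hp)
  have hqBpos : (qB ∘L J).IsPositive := posCJ qB (posJC qB hq)
  have hsumpos : ((pA + qB) ∘L J).IsPositive := by
    rw [ContinuousLinearMap.add_comp]
    exact hpApos.add hqBpos
  obtain ⟨W₁, hW₁inj, hW₁⟩ := exists_hilbertInto_factor (pA ∘L J) hpApos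
  obtain ⟨W₂, hW₂inj, hW₂⟩ := exists_hilbertInto_factor (qB ∘L J) hqBpos
  obtain ⟨W, hWinj, hW⟩ := exists_hilbertInto_factor ((pA + qB) ∘L J) hsumpos
  have reassoc : ∀ (T : K →L[ℂ] K) (C : K →L[ℂ] K), T = C ∘L J →
      ∀ (S : HilbertInto K), S.T ∘L adjoint S.T = T →
      S.T ∘L (adjoint S.T ∘L J) = C := by
    intro T C hT S hS
    rw [← ContinuousLinearMap.comp_assoc, hS, hT, ContinuousLinearMap.comp_assoc, hJ2,
      ContinuousLinearMap.one_def, ContinuousLinearMap.comp_id]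
  have e₁ : W₁.T ∘L (adjoint W₁.T ∘L J) = pA := reassoc _ pA rfl W₁ hW₁
  have e₂ : W₂.T ∘L (adjoint W₂.T ∘L J) = qB := reassoc _ qB rfl W₂ hW₂
  have e : W.T ∘L (adjoint W.T ∘L J) = pA + qB := reassoc _ (pA + qB) rfl W hW
  refine ⟨W₁, W₂, W, hW₁inj, hW₂inj, hWinj, e₁, e₂, e, ?_⟩
  rw [e₁, e₂]
  have hcomm : Commute pA qB := by
    rw [hpA, hqB]
    exact commute_aeval hAB _ _
  exact hcomm
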